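/- Suppose λ ∈ ℂ, μ > 0, α₀, α₁ ∈ ℝ, and u : [0,1] → ℂ is a nontrivial H² solution of λu − μu'' = 0 on (0,1) with Navier boundary conditions μu'(1) + α₁u(1) = 0 and μu'(0) − α₀u(0) = 0, and additionally ∫₀¹ u(y) dy = 0. Let M = max(|α₀|,|α₁|) and C_P the optimal mean-zero Poincaré constant on (0,1). If μ > (1+C_P)M − C_P(α₀+α₁), then Re λ ≤ ((1/C_P + 1)M − (α₀+α₁) − μ/C_P) < 0. -/

import Mathlib

open intervalIntegral MeasureTheory Set

section stmt7aux


private lemma stmt7CS {f g : ℝ → ℝ} {a b : ℝ} (hab : a ≤ b) (hf : Continuous f) (hg : Continuous g)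
    (hf0 : ∀ x, 0 ≤ f x) (hg0 : ∀ x, 0 ≤ g x) :
    (∫ x in a..b, f x * g x)^2 ≤ (∫ x in a..b, f x ^ 2) * (∫ x in a..b, g x ^ 2) := by
  set A := ∫ x in a..b, f x ^ 2 with hAdef
  set B := ∫ x in a..b, f x * g x with hBdef
  set C := ∫ x in a..b, g x ^ 2 with hCdef
  have hA : 0 ≤ A := intervalIntegral.integral_nonneg hab (fun x _ => sq_nonneg _)
  have hB : 0 ≤ B := intervalIntegral.integral_nonneg hab
    (fun x _ => mul_nonneg (hf0 x) (hg0 x))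
  have hC : 0 ≤ C := intervalIntegral.integral_nonneg hab (fun x _ => sq_nonneg _)
  have key : ∀ t : ℝ, 0 < t → 2*B*t ≤ t^2*A + C := by
    intro t ht
    have hmono := intervalIntegral.integral_mono_on (μ := volume) hab
      ((continuous_const.mul (hf.mul hg)).intervalIntegrable a b)
      (((continuous_const.mul (hf.pow 2)).add (hg.pow 2)).intervalIntegrable a b)
      (fun x _ => by nlinarith [sq_nonneg (t * f x - g x)] :
        ∀ x ∈ Icc a b, (2*t) * (f x * g x) ≤ t^2 * f x ^2 + g x ^2)
    simp only [Pi.mul_apply, Pi.add_apply, Pi.pow_apply] at hmono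
    rw [intervalIntegral.integral_const_mul, intervalIntegral.integral_add
      (f := fun x => t^2 * f x ^ 2) (g := fun x => g x ^ 2)
      ((continuous_const.mul (hf.pow 2)).intervalIntegrable a b)
      ((hg.pow 2).intervalIntegrable a b), intervalIntegral.integral_const_mul] at hmono
    calc 2*B*t = (2*t)*B := by ring
    _ ≤ t^2*A + C := hmono
  rcases eq_or_lt_of_le hB with hB0 | hB0
  · have : B^2 = 0 := by rw [← hB0]; ring
    nlinarith [mul_nonneg hA hC]
  rcases eq_or_lt_of_le hA with hA0 | hA0
  · exfalso
    have h := key ((C+1)/(2*B)) (by positivity)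
    rw [← hA0] at h
    have h2 : 2*B*((C+1)/(2*B)) = C+1 := by field_simp
    nlinarith
  · have h := key (B/A) (by positivity)
    have e1 : 2*B*(B/A) = 2*(B^2/A) := by ring
    have e2 : (B/A)^2*A = B^2/A := by field_simp
    rw [e1, e2] at h
    have h3 : B^2/A ≤ C := by linarith
    calc B^2 = (B^2/A)*A := by field_simp
    _ ≤ C*A := mul_le_mul_of_nonneg_right h3 hA
    _ = A*C := by ring


private lemma stmt7sum {N1 N2 a b P Q : ℝ} (h1 : N1^2 ≤ a*P) (h2 : N2^2 ≤ b*Q)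
    (hN1 : 0 ≤ N1) (hN2 : 0 ≤ N2) (ha : 0 ≤ a) (hb : 0 ≤ b) (hP : 0 ≤ P) (hQ : 0 ≤ Q) :
    (N1+N2)^2 ≤ (a+b)*(P+Q) := by
  have ht2 : (N1*N2)^2 ≤ ((a*Q+b*P)/2)^2 := by nlinarith [sq_nonneg (a*Q - b*P), mul_nonneg (mul_nonneg ha hP) hQ, mul_nonneg hN1 hN2, mul_nonneg (mul_nonneg hb hQ) hP]
  have ht : N1*N2 ≤ (a*Q+b*P)/2 := by
    have h0 : 0 ≤ N1*N2 := mul_nonneg hN1 hN2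
    have h0' : 0 ≤ (a*Q+b*P)/2 := by positivity
    exact (pow_le_pow_iff_left₀ h0 h0' two_ne_zero).mp ht2
  nlinarith

private lemma stmt7poincare (u : ℝ → ℂ) (hud : Differentiable ℝ u) (hvc : Continuous (deriv u))
    (hmean : ∫ y in (0:ℝ)..1, u y = 0) :
    (∫ y in (0:ℝ)..1, ‖u y‖^2) ≤ (1/6) * ∫ y in (0:ℝ)..1, ‖deriv u y‖^2 := by
  set v := deriv u with hv
  have huc : Continuous u := hud.continuous
  have hvI : ∀ a b : ℝ, IntervalIntegrable v volume a b := fun a b => hvc.intervalIntegrable a b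
  have huI : ∀ a b : ℝ, IntervalIntegrable u volume a b := fun a b => huc.intervalIntegrable a b
  have key : ∀ y ∈ Icc (0:ℝ) 1, ‖u y‖^2 ≤ (y^3/3 + (1-y)^3/3) * ∫ s in (0:ℝ)..1, ‖v s‖^2 := by
    intro y hy
    obtain ⟨hy0, hy1⟩ := hy
    have parts1 : (∫ s in (0:ℝ)..y, u s) + (∫ s in (0:ℝ)..y, ((s:ℝ):ℂ) * v s) = (y:ℂ) * u y := by
      have h := integral_deriv_mul_eq_sub (a := (0:ℝ)) (b := y)
        (u := fun s => ((s:ℝ):ℂ)) (u' := fun _ => (1:ℂ)) (v := u) (v' := v)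
        (fun x _ => (hasDerivAt_id x).ofReal_comp)
        (fun x _ => (hud x).hasDerivAt)
        ((continuous_const).intervalIntegrable 0 y) (hvI 0 y)
      beta_reduce at h
      rw [integral_add (Continuous.intervalIntegrable (by fun_prop) 0 y)
        (Continuous.intervalIntegrable (by fun_prop) 0 y)] at h
      simpa using h
    have parts2 : (∫ s in y..(1:ℝ), u s) - (∫ s in y..(1:ℝ), (((1:ℝ)-s:ℝ):ℂ) * v s)
        = ((1-y:ℝ):ℂ) * u y := by
      have h := integral_deriv_mul_eq_sub (a := y) (b := (1:ℝ))
        (u := fun s => (((1:ℝ)-s:ℝ):ℂ)) (u' := fun _ => (-1:ℂ)) (v := u) (v' := v)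
        (fun x _ => by simpa using ((hasDerivAt_id x).const_sub (1:ℝ)).ofReal_comp)
        (fun x _ => (hud x).hasDerivAt)
        ((continuous_const).intervalIntegrable y 1) (hvI y 1)
      beta_reduce at h
      rw [integral_add (Continuous.intervalIntegrable (by fun_prop) y 1)
        (Continuous.intervalIntegrable (by fun_prop) y 1)] at h
      simp only [sub_self, Complex.ofReal_zero, zero_mul] at h
      have e : (∫ s in y..(1:ℝ), (-1:ℂ) * u s) = - ∫ s in y..(1:ℝ), u s := by
        rw [intervalIntegral.integral_const_mul]; ring
      rw [e] at h
      linear_combination -h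
    have hmean' : (∫ s in (0:ℝ)..y, u s) + (∫ s in y..(1:ℝ), u s) = 0 := by
      rw [integral_add_adjacent_intervals (huI 0 y) (huI y 1)]; exact hmean
    have e : ((y:ℝ):ℂ) * u y + ((1-y:ℝ):ℂ) * u y = u y := by push_cast; ring
    have rep : u y = (∫ s in (0:ℝ)..y, ((s:ℝ):ℂ) * v s)
        - ∫ s in y..(1:ℝ), (((1:ℝ)-s:ℝ):ℂ) * v s := by
      linear_combination -e - parts1 - parts2 + hmean'
    set N1 := ∫ s in (0:ℝ)..y, |s| * ‖v s‖ with hN1def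
    set N2 := ∫ s in y..(1:ℝ), |1-s| * ‖v s‖ with hN2def
    have hb1 : ‖∫ s in (0:ℝ)..y, ((s:ℝ):ℂ) * v s‖ ≤ N1 := by
      refine le_trans (norm_integral_le_integral_norm hy0) (le_of_eq ?_)
      refine integral_congr fun s hs => ?_
      simp only [norm_mul, Complex.norm_real, Real.norm_eq_abs]
    have hb2 : ‖∫ s in y..(1:ℝ), (((1:ℝ)-s:ℝ):ℂ) * v s‖ ≤ N2 := by
      refine le_trans (norm_integral_le_integral_norm hy1) (le_of_eq ?_)
      refine integral_congr fun s hs => ?_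
      simp only [norm_mul, Complex.norm_real, Real.norm_eq_abs]
    have hnorm : ‖u y‖ ≤ N1 + N2 := by
      rw [rep]
      exact le_trans (norm_sub_le _ _) (add_le_add hb1 hb2)
    have hCS1 : N1^2 ≤ (y^3/3) * ∫ s in (0:ℝ)..y, ‖v s‖^2 := by
      have h := stmt7CS (f := fun s => |s|) (g := fun s => ‖v s‖) hy0
        (continuous_abs) (hvc.norm) (fun x => abs_nonneg x) (fun x => norm_nonneg _)
      have e1 : (∫ s in (0:ℝ)..y, |s|^2) = y^3/3 := by
        rw [show (∫ s in (0:ℝ)..y, |s|^2) = ∫ s in (0:ℝ)..y, s^2 from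
          integral_congr fun s hs => sq_abs s, integral_pow]
        ring
      rw [e1] at h
      exact h
    have hCS2 : N2^2 ≤ ((1-y)^3/3) * ∫ s in y..(1:ℝ), ‖v s‖^2 := by
      have h := stmt7CS (f := fun s => |1-s|) (g := fun s => ‖v s‖) hy1
        (by fun_prop) (hvc.norm) (fun x => abs_nonneg _) (fun x => norm_nonneg _)
      have e1 : (∫ s in y..(1:ℝ), |1-s|^2) = (1-y)^3/3 := by
        rw [show (∫ s in y..(1:ℝ), |1-s|^2) = ∫ s in y..(1:ℝ), (1-s)^2 from
          integral_congr fun s hs => sq_abs _]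
        have := intervalIntegral.integral_comp_sub_left (a := y) (b := (1:ℝ)) (fun x => x^2) 1
        rw [this, integral_pow]
        norm_num
      rw [e1] at h
      exact h
    have hPQ : (∫ s in (0:ℝ)..y, ‖v s‖^2) + (∫ s in y..(1:ℝ), ‖v s‖^2)
        = ∫ s in (0:ℝ)..1, ‖v s‖^2 :=
      integral_add_adjacent_intervals ((hvc.norm.pow 2).intervalIntegrable 0 y)
        ((hvc.norm.pow 2).intervalIntegrable y 1)
    have hN1 : 0 ≤ N1 := integral_nonneg hy0
      (fun s _ => mul_nonneg (abs_nonneg _) (norm_nonneg _))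
    have hN2 : 0 ≤ N2 := integral_nonneg hy1
      (fun s _ => mul_nonneg (abs_nonneg _) (norm_nonneg _))
    have hP : 0 ≤ ∫ s in (0:ℝ)..y, ‖v s‖^2 := integral_nonneg hy0 (fun s _ => sq_nonneg _)
    have hQ : 0 ≤ ∫ s in y..(1:ℝ), ‖v s‖^2 := integral_nonneg hy1 (fun s _ => sq_nonneg _)
    have hsum := stmt7sum hCS1 hCS2 hN1 hN2 (div_nonneg (pow_nonneg hy0 3) (by norm_num))
      (div_nonneg (pow_nonneg (by linarith : (0:ℝ) ≤ 1 - y) 3) (by norm_num)) hP hQ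
    rw [hPQ] at hsum
    calc ‖u y‖^2 ≤ (N1+N2)^2 := by
          have := hnorm
          nlinarith [norm_nonneg (u y)]
    _ ≤ (y^3/3 + (1-y)^3/3) * ∫ s in (0:ℝ)..1, ‖v s‖^2 := hsum
  -- integrate the pointwise bound
  set Y2 := ∫ s in (0:ℝ)..1, ‖v s‖^2 with hY2def
  have hY2 : 0 ≤ Y2 := integral_nonneg zero_le_one (fun s _ => sq_nonneg _)
  have hmono := intervalIntegral.integral_mono_on (μ := volume) zero_le_one
    ((huc.norm.pow 2).intervalIntegrable 0 1)
    (Continuous.intervalIntegrable (by fun_prop) 0 1)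
    key
  have hval : (∫ y in (0:ℝ)..1, (y^3/3 + (1-y)^3/3) * Y2) = (1/6) * Y2 := by
    rw [intervalIntegral.integral_mul_const]
    have e : ∀ y : ℝ, y^3/3 + (1-y)^3/3 = y^2 - y + 1/3 := fun y => by ring
    rw [integral_congr (fun y _ => e y)]
    rw [integral_add (Continuous.intervalIntegrable (by fun_prop) 0 1)
        (Continuous.intervalIntegrable (by fun_prop) 0 1),
      integral_sub (Continuous.intervalIntegrable (by fun_prop) 0 1)
        (Continuous.intervalIntegrable (by fun_prop) 0 1),
      integral_pow, integral_id, intervalIntegral.integral_const]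
    norm_num
  rw [hval] at hmono
  exact hmono

private lemma stmt7energy (lam : ℂ) (μ α₀ α₁ : ℝ) (u : ℝ → ℂ) (hud : Differentiable ℝ u) (hvd : Differentiable ℝ (deriv u))
    (hwc : Continuous (deriv (deriv u)))
    (heqI : ∀ y ∈ Icc (0:ℝ) 1, (μ:ℂ) * deriv (deriv u) y = lam * u y)
    (hbc1 : (μ : ℂ) * deriv u 1 + (α₁ : ℂ) * u 1 = 0)
    (hbc0 : (μ : ℂ) * deriv u 0 - (α₀ : ℂ) * u 0 = 0) :
    lam.re * (∫ y in (0:ℝ)..1, ‖u y‖^2) =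
      -α₀ * ‖u 0‖^2 - α₁ * ‖u 1‖^2 - μ * ∫ y in (0:ℝ)..1, ‖deriv u y‖^2 := by
  set v := deriv u with hvdef
  set w := deriv v with hwdef
  have huc : Continuous u := hud.continuous
  have hvc : Continuous v := hvd.continuous
  set X2 := ∫ y in (0:ℝ)..1, ‖u y‖^2 with hX2
  set Y2 := ∫ y in (0:ℝ)..1, ‖v y‖^2 with hY2
  have hcast : ∀ z : ℂ, z * (starRingEnd ℂ) z = ((‖z‖^2 : ℝ) : ℂ) := fun z => by
    rw [Complex.mul_conj]; norm_cast; rw [Complex.normSq_eq_norm_sq]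
  have e1 : (∫ y in (0:ℝ)..1, lam * (u y * (starRingEnd ℂ) (u y))) = lam * (X2:ℂ) := by
    rw [intervalIntegral.integral_const_mul]
    congr 1
    rw [integral_congr (fun y _ => hcast (u y))]
    exact integral_ofReal
  have e2 : (∫ y in (0:ℝ)..1, v y * (starRingEnd ℂ) (v y)) = (Y2:ℂ) := by
    rw [integral_congr (fun y _ => hcast (v y))]
    exact integral_ofReal
  have e3 : (∫ y in (0:ℝ)..1, (μ:ℂ) * (w y * (starRingEnd ℂ) (u y)))
      = ∫ y in (0:ℝ)..1, lam * (u y * (starRingEnd ℂ) (u y)) := by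
    refine integral_congr fun y hy => ?_
    rw [uIcc_of_le zero_le_one] at hy
    rw [← mul_assoc, heqI y hy, mul_assoc]
  have hμv : (∫ y in (0:ℝ)..1, (μ:ℂ) * (w y * (starRingEnd ℂ) (u y)))
      = (μ:ℂ) * ∫ y in (0:ℝ)..1, w y * (starRingEnd ℂ) (u y) := intervalIntegral.integral_const_mul _ _
  have partsS : (∫ y in (0:ℝ)..1, w y * (starRingEnd ℂ) (u y))
      + (∫ y in (0:ℝ)..1, v y * (starRingEnd ℂ) (v y))
      = v 1 * (starRingEnd ℂ) (u 1) - v 0 * (starRingEnd ℂ) (u 0) := by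
    have hconju : Continuous fun y => (starRingEnd ℂ) (u y) := Complex.continuous_conj.comp huc
    have hconjv : Continuous fun y => (starRingEnd ℂ) (v y) := Complex.continuous_conj.comp hvc
    have h := integral_deriv_mul_eq_sub (a := (0:ℝ)) (b := (1:ℝ))
      (u := v) (u' := w) (v := fun y => (starRingEnd ℂ) (u y))
      (v' := fun y => (starRingEnd ℂ) (v y))
      (fun x _ => (hvd x).hasDerivAt)
      (fun x _ => ((hud x).hasDerivAt).star)
      (hwc.intervalIntegrable 0 1)
      (hconjv.intervalIntegrable 0 1)
    beta_reduce at h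
    rw [integral_add (f := fun y => w y * (starRingEnd ℂ) (u y))
      (g := fun y => v y * (starRingEnd ℂ) (v y)) ((hwc.mul hconju).intervalIntegrable 0 1)
      ((hvc.mul hconjv).intervalIntegrable 0 1)] at h
    exact h
  have hb1 : (μ:ℂ) * v 1 = -(α₁:ℂ) * u 1 := by linear_combination hbc1
  have hb0 : (μ:ℂ) * v 0 = (α₀:ℂ) * u 0 := by linear_combination hbc0
  have hq1 := hcast (u 1)
  have hq0 := hcast (u 0)
  push_cast at hq1 hq0
  have hC : lam * (X2:ℂ) = ((-α₀ * ‖u 0‖^2 - α₁ * ‖u 1‖^2 - μ * Y2 : ℝ) : ℂ) := by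
    push_cast
    linear_combination (-1:ℂ)*e1 - e3 + hμv + (μ:ℂ)*partsS - (μ:ℂ)*e2
      + (starRingEnd ℂ) (u 1)*hb1 - (starRingEnd ℂ) (u 0)*hb0 - (α₁:ℂ)*hq1 - (α₀:ℂ)*hq0
  have := congrArg Complex.re hC
  simpa [← Complex.ofReal_pow] using this
private lemma stmt7boundary (u : ℝ → ℂ) (hud : Differentiable ℝ u) (hvc : Continuous (deriv u)) :
    (∫ y in (0:ℝ)..1, (1-y) * (2 * (deriv u y * (starRingEnd ℂ) (u y)).re))
      = (∫ y in (0:ℝ)..1, ‖u y‖^2) - ‖u 0‖^2 ∧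
    (∫ y in (0:ℝ)..1, y * (2 * (deriv u y * (starRingEnd ℂ) (u y)).re))
      = ‖u 1‖^2 - (∫ y in (0:ℝ)..1, ‖u y‖^2) := by
  have huc : Continuous u := hud.continuous
  have hconju : Continuous fun y => (starRingEnd ℂ) (u y) := Complex.continuous_conj.comp huc
  have hhc : Continuous fun y => 2 * (deriv u y * (starRingEnd ℂ) (u y)).re :=
    continuous_const.mul (Complex.continuous_re.comp (hvc.mul hconju))
  have hGd : ∀ x : ℝ, HasDerivAt (fun y => u y * (starRingEnd ℂ) (u y))
      (((2 * (deriv u x * (starRingEnd ℂ) (u x)).re : ℝ)):ℂ) x := by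
    intro x
    have h1 := ((hud x).hasDerivAt.mul ((hud x).hasDerivAt.star))
    convert h1 using 1
    · rfl
    · rfl
    have e : u x * (starRingEnd ℂ) (deriv u x) = (starRingEnd ℂ) (deriv u x * (starRingEnd ℂ) (u x)) := by
      rw [map_mul, Complex.conj_conj]; ring
    rw [show (star (u x) : ℂ) = (starRingEnd ℂ) (u x) from rfl,
      show (star (deriv u x) : ℂ) = (starRingEnd ℂ) (deriv u x) from rfl, e, Complex.add_conj]
  have hGc : Continuous fun y => u y * (starRingEnd ℂ) (u y) := huc.mul hconju
  have hcast : ∀ z : ℂ, z * (starRingEnd ℂ) z = ((‖z‖^2 : ℝ) : ℂ) := fun z => by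
    rw [Complex.mul_conj]; norm_cast; rw [Complex.normSq_eq_norm_sq]
  have hGint : (∫ y in (0:ℝ)..1, u y * (starRingEnd ℂ) (u y))
      = ((∫ y in (0:ℝ)..1, ‖u y‖^2 : ℝ) : ℂ) := by
    rw [integral_congr (fun y _ => hcast (u y))]; exact integral_ofReal
  constructor
  · have h := integral_deriv_mul_eq_sub (a := (0:ℝ)) (b := (1:ℝ))
      (u := fun y => ((1-y:ℝ):ℂ)) (u' := fun _ => (-1:ℂ))
      (v := fun y => u y * (starRingEnd ℂ) (u y))
      (v' := fun y => ((2 * (deriv u y * (starRingEnd ℂ) (u y)).re : ℝ):ℂ))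
      (fun x _ => by simpa using ((hasDerivAt_id x).const_sub (1:ℝ)).ofReal_comp)
      (fun x _ => hGd x)
      (continuous_const.intervalIntegrable 0 1)
      (Continuous.intervalIntegrable (Complex.continuous_ofReal.comp hhc) 0 1)
    beta_reduce at h
    have hint1 : IntervalIntegrable (fun y : ℝ => (-1:ℂ) * (u y * (starRingEnd ℂ) (u y)))
        volume 0 1 := (continuous_const.mul hGc).intervalIntegrable 0 1
    have hint2 : IntervalIntegrable
        (fun y : ℝ => ((1-y:ℝ):ℂ) * ((2 * (deriv u y * (starRingEnd ℂ) (u y)).re : ℝ):ℂ))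
        volume 0 1 := Continuous.intervalIntegrable
        ((Complex.continuous_ofReal.comp (continuous_const.sub continuous_id)).mul
          (Complex.continuous_ofReal.comp hhc)) 0 1
    rw [integral_add hint1 hint2] at h
    rw [intervalIntegral.integral_const_mul] at h
    rw [show (∫ y in (0:ℝ)..1, ((1-y:ℝ):ℂ) * ((2 * (deriv u y * (starRingEnd ℂ) (u y)).re : ℝ):ℂ))
        = (((∫ y in (0:ℝ)..1, (1-y) * (2 * (deriv u y * (starRingEnd ℂ) (u y)).re)) : ℝ) : ℂ) by
      rw [← intervalIntegral.integral_ofReal]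
      exact integral_congr fun y _ => by push_cast; ring] at h
    rw [hGint, hcast (u 0), hcast (u 1)] at h
    have h2 : (((∫ y in (0:ℝ)..1, (1-y) * (2 * (deriv u y * (starRingEnd ℂ) (u y)).re)) : ℝ):ℂ)
        = (((∫ y in (0:ℝ)..1, ‖u y‖^2) - ‖u 0‖^2 : ℝ):ℂ) := by
      push_cast at h ⊢
      linear_combination h
    exact_mod_cast h2
  · have h := integral_deriv_mul_eq_sub (a := (0:ℝ)) (b := (1:ℝ))
      (u := fun y => ((y:ℝ):ℂ)) (u' := fun _ => (1:ℂ))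
      (v := fun y => u y * (starRingEnd ℂ) (u y))
      (v' := fun y => ((2 * (deriv u y * (starRingEnd ℂ) (u y)).re : ℝ):ℂ))
      (fun x _ => (hasDerivAt_id x).ofReal_comp)
      (fun x _ => hGd x)
      (continuous_const.intervalIntegrable 0 1)
      (Continuous.intervalIntegrable (Complex.continuous_ofReal.comp hhc) 0 1)
    beta_reduce at h
    have hint1 : IntervalIntegrable (fun y : ℝ => (1:ℂ) * (u y * (starRingEnd ℂ) (u y)))
        volume 0 1 := (continuous_const.mul hGc).intervalIntegrable 0 1
    have hint2 : IntervalIntegrable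
        (fun y : ℝ => ((y:ℝ):ℂ) * ((2 * (deriv u y * (starRingEnd ℂ) (u y)).re : ℝ):ℂ))
        volume 0 1 := Continuous.intervalIntegrable
        ((Complex.continuous_ofReal.comp continuous_id).mul
          (Complex.continuous_ofReal.comp hhc)) 0 1
    rw [integral_add hint1 hint2] at h
    rw [intervalIntegral.integral_const_mul] at h
    rw [show (∫ y in (0:ℝ)..1, ((y:ℝ):ℂ) * ((2 * (deriv u y * (starRingEnd ℂ) (u y)).re : ℝ):ℂ))
        = (((∫ y in (0:ℝ)..1, y * (2 * (deriv u y * (starRingEnd ℂ) (u y)).re)) : ℝ) : ℂ) by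
      rw [← intervalIntegral.integral_ofReal]
      exact integral_congr fun y _ => by push_cast; ring] at h
    rw [hGint, hcast (u 1), hcast (u 0)] at h
    have h2 : (((∫ y in (0:ℝ)..1, y * (2 * (deriv u y * (starRingEnd ℂ) (u y)).re)) : ℝ):ℂ)
        = ((‖u 1‖^2 - (∫ y in (0:ℝ)..1, ‖u y‖^2) : ℝ):ℂ) := by
      push_cast at h ⊢
      linear_combination h
    exact_mod_cast h2

end stmt7aux
set_option maxHeartbeats 1000000 in
/-- Zero Fourier mode with Navier conditions on both boundaries and zero mean:
with `M = max(|α₀|,|α₁|)` and `C_P = 1/π` the optimal mean-zero Poincaré constant,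
if `μ > (1+C_P)M − C_P(α₀+α₁)` then `Re λ ≤ (1/C_P + 1)M − (α₀+α₁) − μ/C_P < 0`. -/
theorem stmt_7 (lam : ℂ) (μ α₀ α₁ : ℝ) (hμ : 0 < μ)
    (u : ℝ → ℂ) (hu : ContDiff ℝ 2 u)
    (hnt : ∃ y ∈ Set.Icc (0:ℝ) 1, u y ≠ 0)
    (heq : ∀ y ∈ Set.Ioo (0:ℝ) 1, lam * u y - (μ : ℂ) * deriv (deriv u) y = 0)
    (hbc1 : (μ : ℂ) * deriv u 1 + (α₁ : ℂ) * u 1 = 0)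
    (hbc0 : (μ : ℂ) * deriv u 0 - (α₀ : ℂ) * u 0 = 0)
    (hmean : ∫ y in (0:ℝ)..1, u y = 0)
    (M CP : ℝ) (hM : M = max |α₀| |α₁|) (hCP : CP = Real.pi⁻¹)
    (hμbig : μ > (1 + CP) * M - CP * (α₀ + α₁)) :
    lam.re ≤ (1 / CP + 1) * M - (α₀ + α₁) - μ / CP ∧
      (1 / CP + 1) * M - (α₀ + α₁) - μ / CP < 0 := by
  have hπ3 : (3:ℝ) < Real.pi := Real.pi_gt_three
  have hπ6 : Real.pi < 3.15 := Real.pi_lt_d2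
  have hπ : (0:ℝ) < Real.pi := by linarith
  have hπinvpos : (0:ℝ) < Real.pi⁻¹ := by positivity
  have hπinv3 : Real.pi⁻¹ < 1/3 := by
    rw [show (1/3 : ℝ) = (3:ℝ)⁻¹ by norm_num]
    exact inv_strictAnti₀ (by norm_num) hπ3
  -- regularity
  have hreg : Differentiable ℝ u ∧ ContDiff ℝ 1 (deriv u) := by
    rw [show (2 : WithTop ℕ∞) = 1 + 1 from rfl, contDiff_succ_iff_deriv] at hu
    exact ⟨hu.1, hu.2.2⟩
  obtain ⟨hud, h1⟩ := hreg
  rw [contDiff_one_iff_deriv] at h1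
  obtain ⟨hvd, hwc⟩ := h1
  have huc : Continuous u := hud.continuous
  have hvc : Continuous (deriv u) := hvd.continuous
  -- equation on the closed interval
  have heqI : ∀ y ∈ Icc (0:ℝ) 1, (μ:ℂ) * deriv (deriv u) y = lam * u y := by
    have hcont : Continuous fun y => lam * u y - (μ:ℂ) * deriv (deriv u) y :=
      (continuous_const.mul huc).sub (continuous_const.mul hwc)
    have hEq : EqOn (fun y => lam * u y - (μ:ℂ) * deriv (deriv u) y) (fun _ => 0) (Icc 0 1) := by
      rw [← closure_Ioo (by norm_num : (0:ℝ) ≠ 1)]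
      exact Set.EqOn.closure (fun y hy => heq y hy) hcont continuous_const
    intro y hy
    have h := hEq hy
    simp only at h
    linear_combination -h
  -- main quantities
  set X2 := ∫ y in (0:ℝ)..1, ‖u y‖^2 with hX2def
  set Y2 := ∫ y in (0:ℝ)..1, ‖deriv u y‖^2 with hY2def
  have hY2nn : 0 ≤ Y2 := integral_nonneg zero_le_one (fun s _ => sq_nonneg _)
  -- positivity of X2
  have X2pos : 0 < X2 := by
    obtain ⟨y₀, hy₀, hne⟩ := hnt
    have hz : ∃ z ∈ Ioo (0:ℝ) 1, u z ≠ 0 := by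
      by_contra hcon
      push_neg at hcon
      have hEq : EqOn u (fun _ => 0) (Icc 0 1) := by
        rw [← closure_Ioo (by norm_num : (0:ℝ) ≠ 1)]
        exact Set.EqOn.closure (fun z hz => hcon z hz) huc continuous_const
      exact hne (hEq hy₀)
    obtain ⟨z, hzI, hz0⟩ := hz
    rw [hX2def, intervalIntegral.integral_pos_iff_support_of_nonneg_ae
      (Filter.Eventually.of_forall (fun x => sq_nonneg _))
      ((huc.norm.pow 2).intervalIntegrable 0 1)]
    refine ⟨zero_lt_one, ?_⟩
    have hopen : IsOpen (Function.support (fun y => ‖u y‖^2) ∩ Ioo 0 1) :=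
      ((huc.norm.pow 2).isOpen_support).inter isOpen_Ioo
    have hmem : z ∈ Function.support (fun y => ‖u y‖^2) ∩ Ioo 0 1 :=
      ⟨by simp [Function.mem_support, hz0], hzI⟩
    refine lt_of_lt_of_le (hopen.measure_pos volume ⟨z, hmem⟩)
      (measure_mono (inter_subset_inter_right _ Ioo_subset_Ioc_self))
  -- energy identity
  have energy : lam.re * X2 = -α₀ * ‖u 0‖^2 - α₁ * ‖u 1‖^2 - μ * Y2 :=
    stmt7energy lam μ α₀ α₁ u hud hvd hwc heqI hbc1 hbc0
  -- boundary identities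
  obtain ⟨bId0, bId1⟩ := stmt7boundary u hud hvc
  set Ia := ∫ y in (0:ℝ)..1, (1-y) * (2 * (deriv u y * (starRingEnd ℂ) (u y)).re) with hIa
  set Ib := ∫ y in (0:ℝ)..1, y * (2 * (deriv u y * (starRingEnd ℂ) (u y)).re) with hIb
  -- absolute bounds on Ia, Ib
  have hconju : Continuous fun y => (starRingEnd ℂ) (u y) := Complex.continuous_conj.comp huc
  have hhc : Continuous fun y => 2 * (deriv u y * (starRingEnd ℂ) (u y)).re :=
    continuous_const.mul (Complex.continuous_re.comp (hvc.mul hconju))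
  have hptw : ∀ y : ℝ, |2 * (deriv u y * (starRingEnd ℂ) (u y)).re|
      ≤ (5/2) * ‖u y‖^2 + (2/5) * ‖deriv u y‖^2 := by
    intro y
    have habs : ‖deriv u y * (starRingEnd ℂ) (u y)‖ = ‖deriv u y‖ * ‖u y‖ := by
      rw [norm_mul, Complex.norm_conj]
    have hre : |(deriv u y * (starRingEnd ℂ) (u y)).re| ≤ ‖deriv u y‖ * ‖u y‖ := by
      rw [← habs]; exact Complex.abs_re_le_norm _
    rw [abs_mul, abs_two]
    nlinarith [sq_nonneg (5 * ‖u y‖ - 2 * ‖deriv u y‖), norm_nonneg (u y),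
      norm_nonneg (deriv u y), abs_nonneg ((deriv u y * (starRingEnd ℂ) (u y)).re)]
  have habsint : (∫ y in (0:ℝ)..1, |2 * (deriv u y * (starRingEnd ℂ) (u y)).re|)
      ≤ (5/2) * X2 + (2/5) * Y2 := by
    have hmono := intervalIntegral.integral_mono_on (μ := volume) zero_le_one
      (hhc.abs.intervalIntegrable 0 1)
      (Continuous.intervalIntegrable
        ((continuous_const.mul (huc.norm.pow 2)).add
          (continuous_const.mul (hvc.norm.pow 2))) 0 1)
      (fun y _ => hptw y)
    simp only [Pi.mul_apply, Pi.add_apply, Pi.pow_apply] at hmono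
    rw [integral_add (f := fun y => (5/2) * ‖u y‖^2) (g := fun y => (2/5) * ‖deriv u y‖^2)
      ((continuous_const.mul (huc.norm.pow 2)).intervalIntegrable 0 1)
      ((continuous_const.mul (hvc.norm.pow 2)).intervalIntegrable 0 1),
      intervalIntegral.integral_const_mul, intervalIntegral.integral_const_mul] at hmono
    exact hmono
  have babs1 : |Ia| ≤ ∫ y in (0:ℝ)..1, (1-y) * |2 * (deriv u y * (starRingEnd ℂ) (u y)).re| := by
    refine le_trans (intervalIntegral.abs_integral_le_integral_abs zero_le_one) (le_of_eq ?_)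
    refine integral_congr fun y hy => ?_
    rw [uIcc_of_le zero_le_one] at hy
    rw [abs_mul, abs_of_nonneg (by linarith [hy.2] : (0:ℝ) ≤ 1-y)]
  have babs2 : |Ib| ≤ ∫ y in (0:ℝ)..1, y * |2 * (deriv u y * (starRingEnd ℂ) (u y)).re| := by
    refine le_trans (intervalIntegral.abs_integral_le_integral_abs zero_le_one) (le_of_eq ?_)
    refine integral_congr fun y hy => ?_
    rw [uIcc_of_le zero_le_one] at hy
    rw [abs_mul, abs_of_nonneg hy.1]
  have bsplit : (∫ y in (0:ℝ)..1, (1-y) * |2 * (deriv u y * (starRingEnd ℂ) (u y)).re|)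
      + (∫ y in (0:ℝ)..1, y * |2 * (deriv u y * (starRingEnd ℂ) (u y)).re|)
      = ∫ y in (0:ℝ)..1, |2 * (deriv u y * (starRingEnd ℂ) (u y)).re| := by
    rw [← integral_add (Continuous.intervalIntegrable (by fun_prop) 0 1)
      (Continuous.intervalIntegrable (by fun_prop) 0 1)]
    exact integral_congr fun y _ => by ring
  -- constants
  have hMa0 : |α₀| ≤ M := hM ▸ le_max_left _ _
  have hMa1 : |α₁| ≤ M := hM ▸ le_max_right _ _
  have hM0 : 0 ≤ M := le_trans (abs_nonneg α₀) hMa0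
  have hs2M : α₀ + α₁ ≤ 2*M := by
    have := le_abs_self α₀; have := le_abs_self α₁; linarith
  -- boundary estimate
  have bdry : α₀ * ‖u 0‖^2 + α₁ * ‖u 1‖^2
      ≥ (α₀+α₁) * X2 - M * ((5/2) * X2 + (2/5) * Y2) := by
    have hq0 : ‖u 0‖^2 = X2 - Ia := by linarith [bId0]
    have hq1 : ‖u 1‖^2 = X2 + Ib := by linarith [bId1]
    have t0 : α₀ * Ia ≤ M * |Ia| := by
      calc α₀ * Ia ≤ |α₀ * Ia| := le_abs_self _
      _ = |α₀| * |Ia| := abs_mul _ _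
      _ ≤ M * |Ia| := mul_le_mul_of_nonneg_right hMa0 (abs_nonneg _)
    have t1 : -(α₁ * Ib) ≤ M * |Ib| := by
      calc -(α₁ * Ib) ≤ |(-(α₁ * Ib))| := le_abs_self _
      _ = |α₁| * |Ib| := by rw [abs_neg, abs_mul]
      _ ≤ M * |Ib| := mul_le_mul_of_nonneg_right hMa1 (abs_nonneg _)
    have t2 : M * |Ia| + M * |Ib| ≤ M * ((5/2) * X2 + (2/5) * Y2) := by
      have h3 : |Ia| + |Ib| ≤ (5/2) * X2 + (2/5) * Y2 := by linarith [babs1, babs2, habsint, bsplit]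
      nlinarith [mul_le_mul_of_nonneg_left h3 hM0]
    rw [hq0, hq1]
    nlinarith [t0, t1, t2]
  -- Poincaré
  have hpo : X2 ≤ (1/6) * Y2 := stmt7poincare u hud hvc hmean
  clear_value X2 Y2 Ia Ib
  -- arithmetic setup
  rw [hCP] at hμbig ⊢
  have hgoalT : (1 / Real.pi⁻¹ + 1) * M - (α₀ + α₁) - μ / Real.pi⁻¹
      = (Real.pi + 1) * M - (α₀ + α₁) - μ * Real.pi := by
    rw [one_div, inv_inv, div_eq_mul_inv, inv_inv]
  rw [hgoalT]
  have hμM : (2/5) * M ≤ μ := by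
    have c1 : Real.pi⁻¹ * (α₀ + α₁) ≤ Real.pi⁻¹ * (2*M) :=
      mul_le_mul_of_nonneg_left hs2M hπinvpos.le
    have c2 : Real.pi⁻¹ * M ≤ (1/3) * M := mul_le_mul_of_nonneg_right hπinv3.le hM0
    nlinarith [hμbig]
  constructor
  · -- main estimate
    have c1 : 0 ≤ (μ - (2/5)*M) * (Y2 - 6*X2) :=
      mul_nonneg (by linarith) (by linarith)
    have c2 : 0 ≤ (6 - Real.pi) * ((μ - (2/5)*M) * X2) :=
      mul_nonneg (by linarith) (mul_nonneg (by linarith) X2pos.le)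
    have c3 : 0 ≤ ((3/5)*Real.pi - 3/2) * (M * X2) :=
      mul_nonneg (by nlinarith) (mul_nonneg hM0 X2pos.le)
    have hT : lam.re * X2 ≤ ((Real.pi + 1) * M - (α₀ + α₁) - μ * Real.pi) * X2 := by
      nlinarith [energy, bdry, c1, c2, c3]
    exact le_of_mul_le_mul_right hT X2pos
  · -- negativity of the bound
    have hc : Real.pi * ((1 + Real.pi⁻¹) * M - Real.pi⁻¹ * (α₀ + α₁)) < Real.pi * μ :=
      (mul_lt_mul_iff_right₀ hπ).mpr hμbig
    have e : Real.pi * ((1 + Real.pi⁻¹) * M - Real.pi⁻¹ * (α₀ + α₁))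
        = (Real.pi + 1) * M - (α₀ + α₁) := by
      field_simp
    rw [e] at hc
    linarith
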